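/- arXiv:1806.08931 — 2 statements merged into one kernel-verified Lean document; each statement's English description precedes it below -/
import Mathlib

section
/- Let R be an m × n rectangle in ℤ² and A a p-random subset. The probability that R has no vertical double gap (i.e. for every pair of consecutive columns, at least one of the 2n sites is in A) is at most e^{−(m−1)·g(n·q)}, where q = −log(1−p) and g(z) = −log(β(1−e^{−z})), β(u) = (u+√(u(4−3u)))/2. -/
noncomputable def betaFn (u : ℝ) : ℝ := (u + Real.sqrt (u * (4 - 3 * u))) / 2

noncomputable def gFn (z : ℝ) : ℝ := - Real.log (betaFn (1 - Real.exp (-z)))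

open scoped Classical in
/-- The probability of the event `E` under the `p`-random (product Bernoulli)
measure on subsets of the finite set `V`. -/
noncomputable def probEvent {ι : Type*} [DecidableEq ι] (V : Finset ι) (p : ℝ)
    (E : Finset ι → Prop) : ℝ :=
  ∑ A ∈ V.powerset, if E A then p ^ A.card * (1 - p) ^ (V.card - A.card) else 0

/-- The rectangle `[1,m] × [1,n]` as a finite set of sites. -/
noncomputable def rectFin (m n : ℕ) : Finset (ℤ × ℤ) := Finset.Icc 1 (m : ℤ) ×ˢ Finset.Icc 1 (n : ℤ)

/-- `A` has no vertical double gap in the `m × n` rectangle: for every pair of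
consecutive columns `j, j+1` (with `1 ≤ j ≤ m−1`), some site of those two
columns lies in `A`. -/
def NoVerticalDoubleGap (m n : ℕ) (A : Finset (ℤ × ℤ)) : Prop :=
  ∀ j : ℤ, 1 ≤ j → j ≤ (m : ℤ) - 1 →
    ∃ v ∈ A, (v.1 = j ∨ v.1 = j + 1) ∧ 1 ≤ v.2 ∧ v.2 ≤ (n : ℤ)

open Finset

open scoped Classical

namespace HolroydAux

/-! ### Generic weight lemmas -/

/-- weight of a subset relative to a ground set of cardinality `N`. -/
noncomputable def wt (p : ℝ) (N : ℕ) (A : Finset (ℤ × ℤ)) : ℝ :=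
  p ^ A.card * (1 - p) ^ (N - A.card)

lemma sum_wt (p : ℝ) (V : Finset (ℤ × ℤ)) :
    ∑ A ∈ V.powerset, wt p V.card A = 1 := by
  have h := Finset.prod_add (fun _ : ℤ × ℤ => p) (fun _ => 1 - p) V
  simp only [Finset.prod_const] at h
  have : ∀ A ∈ V.powerset, p ^ A.card * (1 - p) ^ (V \ A).card = wt p V.card A := by
    intro A hA
    rw [Finset.mem_powerset] at hA
    rw [Finset.card_sdiff_of_subset hA, wt]
  rw [Finset.sum_congr rfl this] at h
  simpa using h.symm

lemma sum_powerset_union {s t : Finset (ℤ × ℤ)} (h : Disjoint s t) (f : Finset (ℤ × ℤ) → ℝ) :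
    ∑ A ∈ (s ∪ t).powerset, f A
      = ∑ B ∈ s.powerset, ∑ C ∈ t.powerset, f (B ∪ C) := by
  rw [← Finset.sum_product']
  have key : ∀ A ∈ (s ∪ t).powerset, A ∩ s ∪ A ∩ t = A := by
    intro A hA
    rw [Finset.mem_powerset] at hA
    rw [← Finset.inter_union_distrib_left, Finset.inter_eq_left.2 hA]
  apply Finset.sum_nbij' (i := fun A => (A ∩ s, A ∩ t)) (j := fun P => P.1 ∪ P.2)
  · intro A hA
    simp [Finset.mem_product, Finset.inter_subset_right]
  · intro P hP
    rw [Finset.mem_product] at hP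
    rw [Finset.mem_powerset]
    exact Finset.union_subset_union (Finset.mem_powerset.1 hP.1) (Finset.mem_powerset.1 hP.2)
  · exact key
  · intro P hP
    rw [Finset.mem_product, Finset.mem_powerset, Finset.mem_powerset] at hP
    obtain ⟨h1, h2⟩ := hP
    have hs2 : P.2 ∩ s = ∅ := Finset.eq_empty_of_forall_notMem fun x hx =>
      Finset.disjoint_left.1 h (Finset.mem_inter.1 hx).2 (h2 (Finset.mem_inter.1 hx).1)
    have ht1 : P.1 ∩ t = ∅ := Finset.eq_empty_of_forall_notMem fun x hx =>
      Finset.disjoint_left.1 h (h1 (Finset.mem_inter.1 hx).1) (Finset.mem_inter.1 hx).2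
    have e1 : (P.1 ∪ P.2) ∩ s = P.1 := by
      rw [Finset.union_inter_distrib_right, Finset.inter_eq_left.2 h1, hs2, Finset.union_empty]
    have e2 : (P.1 ∪ P.2) ∩ t = P.2 := by
      rw [Finset.union_inter_distrib_right, Finset.inter_eq_left.2 h2, ht1, Finset.empty_union]
    exact Prod.ext e1 e2
  · intro A hA
    rw [key A hA]

/-! ### rectangle / column decomposition -/

noncomputable def col (j : ℤ) (n : ℕ) : Finset (ℤ × ℤ) := ({j} : Finset ℤ) ×ˢ Finset.Icc 1 (n : ℤ)

lemma card_col (j : ℤ) (n : ℕ) : (col j n).card = n := by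
  simp [col]

lemma card_rect (m n : ℕ) : (rectFin m n).card = m * n := by
  simp [rectFin]

lemma mem_col {v : ℤ × ℤ} {j : ℤ} {n : ℕ} :
    v ∈ col j n ↔ v.1 = j ∧ 1 ≤ v.2 ∧ v.2 ≤ (n : ℤ) := by
  cases v
  simp only [col, Finset.mem_product, Finset.mem_singleton, Finset.mem_Icc]

lemma mem_rect {v : ℤ × ℤ} {m n : ℕ} :
    v ∈ rectFin m n ↔ (1 ≤ v.1 ∧ v.1 ≤ (m : ℤ)) ∧ 1 ≤ v.2 ∧ v.2 ≤ (n : ℤ) := by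
  cases v
  simp only [rectFin, Finset.mem_product, Finset.mem_Icc]

lemma rect_succ (m n : ℕ) : rectFin (m + 1) n = rectFin m n ∪ col ((m : ℤ) + 1) n := by
  have h : Finset.Icc (1 : ℤ) ((m : ℤ) + 1) = Finset.Icc 1 (m : ℤ) ∪ {(m : ℤ) + 1} := by
    ext x; simp [Finset.mem_Icc]; omega
  simp only [rectFin, col, show ((m + 1 : ℕ) : ℤ) = (m : ℤ) + 1 by push_cast; ring, h,
    Finset.union_product]

lemma disj_rect_col (m n : ℕ) : Disjoint (rectFin m n) (col ((m : ℤ) + 1) n) := by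
  rw [Finset.disjoint_left]
  intro v hv hc
  rw [mem_rect] at hv
  rw [mem_col] at hc
  omega

def ColOcc (n : ℕ) (j : ℤ) (A : Finset (ℤ × ℤ)) : Prop :=
  ∃ v ∈ A, v.1 = j ∧ 1 ≤ v.2 ∧ v.2 ≤ (n : ℤ)

noncomputable def PP (p : ℝ) (m n : ℕ) : ℝ := probEvent (rectFin m n) p (NoVerticalDoubleGap m n)

noncomputable def QQ (p : ℝ) (m n : ℕ) : ℝ :=
  probEvent (rectFin m n) p (fun A => NoVerticalDoubleGap m n A ∧ ColOcc n (m : ℤ) A)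

lemma sum_wt_nonempty (p : ℝ) (V : Finset (ℤ × ℤ)) :
    ∑ A ∈ V.powerset, (if A.Nonempty then wt p V.card A else 0)
      = 1 - (1 - p) ^ V.card := by
  have h : ∀ A ∈ V.powerset, (if A.Nonempty then wt p V.card A else 0)
      = wt p V.card A - (if A = ∅ then wt p V.card A else 0) := by
    intro A _
    by_cases hA : A = ∅
    · subst hA; simp
    · rw [if_pos (Finset.nonempty_iff_ne_empty.2 hA), if_neg hA, sub_zero]
  rw [Finset.sum_congr rfl h, Finset.sum_sub_distrib, sum_wt,
    Finset.sum_ite_eq' V.powerset (∅ : Finset (ℤ × ℤ)) (wt p V.card),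
    if_pos (Finset.empty_mem_powerset V)]
  simp [wt]

/-! ### event decompositions -/

lemma event_iff (m n : ℕ) (hm : 1 ≤ m) {B C : Finset (ℤ × ℤ)}
    (hB : B ⊆ rectFin m n) (hC : C ⊆ col ((m : ℤ) + 1) n) :
    NoVerticalDoubleGap (m + 1) n (B ∪ C)
      ↔ NoVerticalDoubleGap m n B ∧ (ColOcc n (m : ℤ) B ∨ C.Nonempty) := by
  constructor
  · intro h
    refine ⟨?_, ?_⟩
    · intro j h1 h2
      obtain ⟨v, hv, hj, hr⟩ := h j h1 (by push_cast; omega)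
      rcases Finset.mem_union.1 hv with hvB | hvC
      · exact ⟨v, hvB, hj, hr⟩
      · exfalso
        have hmem := hC hvC
        rw [mem_col] at hmem
        rcases hj with h | h <;> omega
    · obtain ⟨v, hv, hj, hr⟩ := h (m : ℤ) (by exact_mod_cast hm) (by push_cast; omega)
      rcases Finset.mem_union.1 hv with hvB | hvC
      · left
        have hv1 : v.1 ≤ (m : ℤ) := ((mem_rect.1 (hB hvB)).1).2
        refine ⟨v, hvB, ?_, hr⟩
        rcases hj with h | h <;> omega
      · right; exact ⟨v, hvC⟩
  · rintro ⟨h1, h2⟩ j hj1 hj2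
    by_cases hjm : j ≤ (m : ℤ) - 1
    · obtain ⟨v, hv, hj, hr⟩ := h1 j hj1 hjm
      exact ⟨v, Finset.mem_union_left _ hv, hj, hr⟩
    · have hj_eq : j = (m : ℤ) := by push_cast at hj2; omega
      subst hj_eq
      rcases h2 with ⟨v, hv, hv1, hr⟩ | ⟨v, hv⟩
      · exact ⟨v, Finset.mem_union_left _ hv, Or.inl hv1, hr⟩
      · have hmem := hC hv
        rw [mem_col] at hmem
        exact ⟨v, Finset.mem_union_right _ hv, Or.inr hmem.1, hmem.2⟩

lemma colOcc_union_iff (m n : ℕ) {B C : Finset (ℤ × ℤ)}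
    (hB : B ⊆ rectFin m n) (hC : C ⊆ col ((m : ℤ) + 1) n) :
    ColOcc n ((m : ℤ) + 1) (B ∪ C) ↔ C.Nonempty := by
  constructor
  · rintro ⟨v, hv, hv1, hr⟩
    rcases Finset.mem_union.1 hv with hvB | hvC
    · exfalso
      have hmem := hB hvB
      rw [mem_rect] at hmem
      omega
    · exact ⟨v, hvC⟩
  · rintro ⟨v, hv⟩
    have hmem := hC hv
    rw [mem_col] at hmem
    exact ⟨v, Finset.mem_union_right _ hv, hmem.1, hmem.2⟩

lemma wt_union (p : ℝ) (m n : ℕ) {B C : Finset (ℤ × ℤ)}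
    (hB : B ⊆ rectFin m n) (hC : C ⊆ col ((m : ℤ) + 1) n) :
    wt p ((m + 1) * n) (B ∪ C) = wt p (m * n) B * wt p n C := by
  have hd : Disjoint B C :=
    Finset.disjoint_of_subset_left hB (Finset.disjoint_of_subset_right hC (disj_rect_col m n))
  have hcard : (B ∪ C).card = B.card + C.card := Finset.card_union_of_disjoint hd
  have hB' : B.card ≤ m * n := by
    have := Finset.card_le_card hB; rwa [card_rect] at this
  have hC' : C.card ≤ n := by
    have := Finset.card_le_card hC; rwa [card_col] at this
  rw [wt, wt, wt, hcard]
  have e : (m + 1) * n - (B.card + C.card) = (m * n - B.card) + (n - C.card) := by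
    have : (m + 1) * n = m * n + n := by ring
    omega
  rw [e, pow_add, pow_add]
  ring

/-! ### recurrences -/

lemma probEvent_eq_sum_wt (V : Finset (ℤ × ℤ)) (p : ℝ) (E : Finset (ℤ × ℤ) → Prop) :
    probEvent V p E = ∑ A ∈ V.powerset, if E A then wt p V.card A else 0 := rfl

lemma PP_eq (p : ℝ) (m n : ℕ) :
    PP p m n = ∑ A ∈ (rectFin m n).powerset,
      if NoVerticalDoubleGap m n A then wt p (rectFin m n).card A else 0 := rfl

lemma QQ_eq (p : ℝ) (m n : ℕ) :
    QQ p m n = ∑ A ∈ (rectFin m n).powerset,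
      if NoVerticalDoubleGap m n A ∧ ColOcc n (m : ℤ) A
        then wt p (rectFin m n).card A else 0 := by
  rw [QQ, probEvent]
  exact Finset.sum_congr rfl fun A _ => by
    by_cases h : NoVerticalDoubleGap m n A ∧ ColOcc n (m : ℤ) A <;> simp [h, wt]

lemma PP_succ (p : ℝ) (m n : ℕ) (hm : 1 ≤ m) :
    PP p (m + 1) n
      = (1 - (1 - p) ^ n) * PP p m n + (1 - p) ^ n * QQ p m n := by
  rw [PP_eq, card_rect, rect_succ, sum_powerset_union (disj_rect_col m n)]
  have step : ∀ B ∈ (rectFin m n).powerset,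
      (∑ C ∈ (col ((m : ℤ) + 1) n).powerset,
        if NoVerticalDoubleGap (m + 1) n (B ∪ C) then wt p ((m + 1) * n) (B ∪ C) else 0)
      = (1 - (1 - p) ^ n) * (if NoVerticalDoubleGap m n B then wt p (m * n) B else 0)
        + (1 - p) ^ n *
          (if NoVerticalDoubleGap m n B ∧ ColOcc n (m : ℤ) B then wt p (m * n) B else 0) := by
    intro B hB
    rw [Finset.mem_powerset] at hB
    have congr1 : ∀ C ∈ (col ((m : ℤ) + 1) n).powerset,
        (if NoVerticalDoubleGap (m + 1) n (B ∪ C) then wt p ((m + 1) * n) (B ∪ C) else 0)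
        = (if NoVerticalDoubleGap m n B ∧ (ColOcc n (m : ℤ) B ∨ C.Nonempty)
            then wt p (m * n) B * wt p n C else 0) := by
      intro C hC
      rw [Finset.mem_powerset] at hC
      rw [wt_union p m n hB hC]
      congr 1
      exact propext (event_iff m n hm hB hC)
    rw [Finset.sum_congr rfl congr1]
    by_cases h1 : NoVerticalDoubleGap m n B
    · by_cases h2 : ColOcc n (m : ℤ) B
      · have : ∀ C ∈ (col ((m : ℤ) + 1) n).powerset,
            (if NoVerticalDoubleGap m n B ∧ (ColOcc n (m : ℤ) B ∨ C.Nonempty)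
              then wt p (m * n) B * wt p n C else 0) = wt p (m * n) B * wt p n C := by
          intro C _; rw [if_pos ⟨h1, Or.inl h2⟩]
        rw [Finset.sum_congr rfl this, ← Finset.mul_sum]
        have hsw := sum_wt p (col ((m : ℤ) + 1) n)
        rw [card_col] at hsw
        rw [hsw, if_pos h1, if_pos ⟨h1, h2⟩]
        ring
      · have : ∀ C ∈ (col ((m : ℤ) + 1) n).powerset,
            (if NoVerticalDoubleGap m n B ∧ (ColOcc n (m : ℤ) B ∨ C.Nonempty)
              then wt p (m * n) B * wt p n C else 0)
            = wt p (m * n) B * (if C.Nonempty then wt p n C else 0) := by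
          intro C _
          by_cases hC : C.Nonempty
          · rw [if_pos ⟨h1, Or.inr hC⟩, if_pos hC]
          · rw [if_neg (by tauto), if_neg hC, mul_zero]
        rw [Finset.sum_congr rfl this, ← Finset.mul_sum]
        have hsw := sum_wt_nonempty p (col ((m : ℤ) + 1) n)
        rw [card_col] at hsw
        rw [hsw, if_pos h1, if_neg (by tauto)]
        ring
    · have : ∀ C ∈ (col ((m : ℤ) + 1) n).powerset,
          (if NoVerticalDoubleGap m n B ∧ (ColOcc n (m : ℤ) B ∨ C.Nonempty)
            then wt p (m * n) B * wt p n C else 0) = 0 := by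
        intro C _; rw [if_neg (by tauto)]
      rw [Finset.sum_congr rfl this, Finset.sum_const_zero, if_neg h1,
        if_neg (by tauto)]
      ring
  rw [Finset.sum_congr rfl step, Finset.sum_add_distrib, ← Finset.mul_sum, ← Finset.mul_sum,
    PP_eq, QQ_eq, card_rect]

lemma QQ_succ (p : ℝ) (m n : ℕ) (hm : 1 ≤ m) :
    QQ p (m + 1) n = (1 - (1 - p) ^ n) * PP p m n := by
  rw [QQ_eq, card_rect, rect_succ, sum_powerset_union (disj_rect_col m n)]
  have step : ∀ B ∈ (rectFin m n).powerset,
      (∑ C ∈ (col ((m : ℤ) + 1) n).powerset,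
        if NoVerticalDoubleGap (m + 1) n (B ∪ C) ∧ ColOcc n ((m + 1 : ℕ) : ℤ) (B ∪ C)
          then wt p ((m + 1) * n) (B ∪ C) else 0)
      = (1 - (1 - p) ^ n) * (if NoVerticalDoubleGap m n B then wt p (m * n) B else 0) := by
    intro B hB
    rw [Finset.mem_powerset] at hB
    have congr1 : ∀ C ∈ (col ((m : ℤ) + 1) n).powerset,
        (if NoVerticalDoubleGap (m + 1) n (B ∪ C) ∧ ColOcc n ((m + 1 : ℕ) : ℤ) (B ∪ C)
          then wt p ((m + 1) * n) (B ∪ C) else 0)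
        = (if NoVerticalDoubleGap m n B then wt p (m * n) B else 0)
            * (if C.Nonempty then wt p n C else 0) := by
      intro C hC
      rw [Finset.mem_powerset] at hC
      rw [wt_union p m n hB hC]
      have e2 : ColOcc n ((m + 1 : ℕ) : ℤ) (B ∪ C) ↔ C.Nonempty := by
        rw [show ((m + 1 : ℕ) : ℤ) = (m : ℤ) + 1 by push_cast; ring]
        exact colOcc_union_iff m n hB hC
      by_cases h1 : NoVerticalDoubleGap m n B
      · by_cases h2 : C.Nonempty
        · rw [if_pos ⟨(event_iff m n hm hB hC).2 ⟨h1, Or.inr h2⟩, e2.2 h2⟩,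
            if_pos h1, if_pos h2]
        · rw [if_neg (fun h => h2 (e2.1 h.2)), if_pos h1, if_neg h2, mul_zero]
      · rw [if_neg (fun h => h1 ((event_iff m n hm hB hC).1 h.1).1), if_neg h1, zero_mul]
    rw [Finset.sum_congr rfl congr1, ← Finset.mul_sum]
    have hsw := sum_wt_nonempty p (col ((m : ℤ) + 1) n)
    rw [card_col] at hsw
    rw [hsw]
    ring
  rw [Finset.sum_congr rfl step, ← Finset.mul_sum, PP_eq, card_rect]

lemma PP_one (p : ℝ) (n : ℕ) : PP p 1 n = 1 := by
  rw [PP_eq]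
  have h : ∀ A ∈ (rectFin 1 n).powerset,
      (if NoVerticalDoubleGap 1 n A then wt p (rectFin 1 n).card A else 0)
      = wt p (rectFin 1 n).card A := by
    intro A _
    rw [if_pos]
    intro j h1 h2
    exfalso
    have : ((1 : ℕ) : ℤ) = 1 := by norm_num
    omega
  rw [Finset.sum_congr rfl h, sum_wt]

lemma QQ_one (p : ℝ) (n : ℕ) : QQ p 1 n = 1 - (1 - p) ^ n := by
  rw [QQ_eq]
  have hcard : (rectFin 1 n).card = n := by rw [card_rect]; ring
  have h : ∀ A ∈ (rectFin 1 n).powerset,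
      (if NoVerticalDoubleGap 1 n A ∧ ColOcc n ((1 : ℕ) : ℤ) A
        then wt p (rectFin 1 n).card A else 0)
      = (if A.Nonempty then wt p (rectFin 1 n).card A else 0) := by
    intro A hA
    rw [Finset.mem_powerset] at hA
    congr 1
    apply propext
    constructor
    · rintro ⟨_, v, hv, _⟩; exact ⟨v, hv⟩
    · rintro ⟨v, hv⟩
      constructor
      · intro j h1 h2
        exfalso
        have : ((1 : ℕ) : ℤ) = 1 := by norm_num
        omega
      · have hmm := hA hv
        rw [mem_rect] at hmm
        refine ⟨v, hv, ?_, hmm.2.1, hmm.2.2⟩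
        have : ((1 : ℕ) : ℤ) = 1 := by norm_num
        omega
  rw [Finset.sum_congr rfl h, sum_wt_nonempty, hcard]

/-! ### facts about betaFn -/

lemma beta_pos {u : ℝ} (hu0 : 0 < u) (hu1 : u < 1) : 0 < betaFn u := by
  have hs : 0 ≤ Real.sqrt (u * (4 - 3 * u)) := Real.sqrt_nonneg _
  rw [betaFn]; linarith

lemma beta_sq {u : ℝ} (hu0 : 0 < u) (hu1 : u < 1) :
    betaFn u ^ 2 = u * betaFn u + u * (1 - u) := by
  have hs2 : Real.sqrt (u * (4 - 3 * u)) ^ 2 = u * (4 - 3 * u) :=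
    Real.sq_sqrt (by nlinarith)
  rw [betaFn]
  nlinarith [hs2]

lemma base_le_beta {u : ℝ} (hu0 : 0 < u) (hu1 : u < 1) :
    u * (1 + (1 - u)) ≤ betaFn u := by
  set s := Real.sqrt (u * (4 - 3 * u)) with hs
  have hs0 : 0 ≤ s := Real.sqrt_nonneg _
  have hs2 : s ^ 2 = u * (4 - 3 * u) := Real.sq_sqrt (by nlinarith)
  rw [betaFn, ← hs]
  have h1 : 0 < 3 * u - 2 * u ^ 2 := by nlinarith
  have h2 : (3 * u - 2 * u ^ 2) ^ 2 ≤ s ^ 2 := by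
    rw [hs2]
    nlinarith [mul_nonneg hu0.le (pow_nonneg (by linarith : (0:ℝ) ≤ 1 - u) 3)]
  have h3 : 3 * u - 2 * u ^ 2 ≤ s := by nlinarith [hs0, h1, h2]
  linarith

/-! ### main induction -/

lemma PP_bound (p : ℝ) (n : ℕ) (hn : 1 ≤ n) (hp0 : 0 < p) (hp1 : p < 1) :
    ∀ k : ℕ, PP p (k + 1) n ≤ betaFn (1 - (1 - p) ^ n) ^ k := by
  set a : ℝ := (1 - p) ^ n with ha
  have ha0 : 0 < a := pow_pos (by linarith) n
  have ha1 : a < 1 := pow_lt_one₀ (by linarith) (by linarith) (by omega)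
  set u : ℝ := 1 - a with hu
  have hu0 : 0 < u := by rw [hu]; linarith
  have hu1 : u < 1 := by rw [hu]; linarith
  set b : ℝ := betaFn u with hb
  have hb0 : 0 < b := beta_pos hu0 hu1
  have hbsq : b ^ 2 = u * b + u * (1 - u) := beta_sq hu0 hu1
  have hbase : u * (1 + (1 - u)) ≤ b := base_le_beta hu0 hu1
  intro k
  induction k using Nat.strong_induction_on with
  | _ k ih =>
    match k with
    | 0 => rw [PP_one]; norm_num
    | 1 =>
      rw [PP_succ p 1 n le_rfl, PP_one, QQ_one, pow_one]
      have e : (1 - a) * 1 + a * (1 - a) = u * (1 + (1 - u)) := by rw [hu]; ring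
      rw [← ha, e]
      exact hbase
    | (k + 2) =>
      have h1 : PP p (k + 2) n ≤ b ^ (k + 1) := ih (k + 1) (by omega)
      have h2 : PP p (k + 1) n ≤ b ^ k := ih k (by omega)
      rw [PP_succ p (k + 2) n (by omega), QQ_succ p (k + 1) n (by omega), ← ha, ← hu]
      have hau : a = 1 - u := by rw [hu]; ring
      calc u * PP p (k + 2) n + a * (u * PP p (k + 1) n)
          ≤ u * b ^ (k + 1) + a * (u * b ^ k) := by
            have hA := mul_le_mul_of_nonneg_left h1 (le_of_lt hu0)
            have hB := mul_le_mul_of_nonneg_left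
              (mul_le_mul_of_nonneg_left h2 (le_of_lt hu0)) (le_of_lt ha0)
            linarith
        _ = b ^ k * (u * b + u * (1 - u)) := by rw [hau]; ring
        _ = b ^ k * b ^ 2 := by rw [hbsq]
        _ = b ^ (k + 2) := by ring

end HolroydAux

/-- Lemma 8 of Holroyd: the probability of no vertical double gap is at most
`exp(−(m−1)·g(nq))`. -/
theorem prob_no_double_gap_le (m n : ℕ) (hm : 1 ≤ m) (hn : 1 ≤ n)
    (p : ℝ) (hp0 : 0 < p) (hp1 : p < 1) :
    probEvent (rectFin m n) p (NoVerticalDoubleGap m n) ≤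
      Real.exp (-((m : ℝ) - 1) * gFn ((n : ℝ) * (-Real.log (1 - p)))) := by
  have h1p : (0 : ℝ) < 1 - p := by linarith
  have hexp : Real.exp (-((n : ℝ) * (-Real.log (1 - p)))) = (1 - p) ^ n := by
    rw [show -((n : ℝ) * -Real.log (1 - p)) = (n : ℝ) * Real.log (1 - p) by ring,
      Real.exp_nat_mul, Real.exp_log h1p]
  have harg : 1 - Real.exp (-((n : ℝ) * (-Real.log (1 - p)))) = 1 - (1 - p) ^ n := by
    rw [hexp]
  set u : ℝ := 1 - (1 - p) ^ n with hu
  have ha1 : (1 - p) ^ n < 1 := pow_lt_one₀ (by linarith) (by linarith) (by omega)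
  have hu0 : 0 < u := by rw [hu]; linarith
  have hu1 : u < 1 := by
    have : 0 < (1 - p) ^ n := pow_pos h1p n
    rw [hu]; linarith
  have hb0 : 0 < betaFn u := HolroydAux.beta_pos hu0 hu1
  have hrhs : Real.exp (-((m : ℝ) - 1) * gFn ((n : ℝ) * (-Real.log (1 - p))))
      = betaFn u ^ (m - 1) := by
    rw [gFn, harg]
    have hc : -((m : ℝ) - 1) * -Real.log (betaFn u)
        = ((m - 1 : ℕ) : ℝ) * Real.log (betaFn u) := by
      have e : ((m - 1 : ℕ) : ℝ) = (m : ℝ) - 1 := by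
        have h1 : (1 : ℕ) ≤ m := hm
        push_cast [Nat.cast_sub h1]
        ring
      rw [e]; ring
    rw [hc, Real.exp_nat_mul, Real.exp_log hb0]
  rw [hrhs]
  have hbd := HolroydAux.PP_bound p n hn hp0 hp1 (m - 1)
  rw [show m - 1 + 1 = m by omega] at hbd
  exact hbd
end

section
/- Let R be an m × n rectangle in ℤ² and A a p-random subset. The probability that R is crossed from left to right (no vertical double gap and the rightmost column contains a site of A) is at most e^{−m·g(n·q)}, where q = −log(1−p) and g(z) = −log(β(1−e^{−z})), β(u) = (u+√(u(4−3u)))/2. -/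
/-- The `m × n` rectangle is crossed from left to right by `A`: no vertical
double gap, and the rightmost column is occupied. -/
def CrossedLeftRight (m n : ℕ) (A : Finset (ℤ × ℤ)) : Prop :=
  NoVerticalDoubleGap m n A ∧ ∃ v ∈ A, v.1 = (m : ℤ) ∧ 1 ≤ v.2 ∧ v.2 ≤ (n : ℤ)

open Finset
open scoped Classical

/-! ### Auxiliary sum lemmas -/

lemma sum_weights {ι : Type*} [DecidableEq ι] (V : Finset ι) (p : ℝ) :
    ∑ A ∈ V.powerset, p ^ A.card * (1 - p) ^ (V.card - A.card) = 1 := by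
  have h := Finset.prod_add (fun _ : ι => p) (fun _ : ι => 1 - p) V
  simp only [add_sub_cancel, prod_const_one, prod_const] at h
  rw [show ∑ A ∈ V.powerset, p ^ A.card * (1 - p) ^ (V.card - A.card)
      = ∑ A ∈ V.powerset, p ^ A.card * (1 - p) ^ (V \ A).card from
    Finset.sum_congr rfl fun A hA => by rw [card_sdiff_of_subset (mem_powerset.1 hA)]]
  exact h.symm

lemma sum_weights_nonempty {ι : Type*} [DecidableEq ι] (V : Finset ι) (p : ℝ) :
    ∑ A ∈ V.powerset, (if A.Nonempty then p ^ A.card * (1 - p) ^ (V.card - A.card) else 0)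
      = 1 - (1 - p) ^ V.card := by
  have key : ∀ A ∈ V.powerset,
      (if A.Nonempty then p ^ A.card * (1 - p) ^ (V.card - A.card) else 0)
        = p ^ A.card * (1 - p) ^ (V.card - A.card)
          - (if A = ∅ then p ^ A.card * (1 - p) ^ (V.card - A.card) else 0) := by
    intro A _
    by_cases h : A = ∅
    · simp [h]
    · simp [h, Finset.nonempty_iff_ne_empty.2 h]
  rw [Finset.sum_congr rfl key, Finset.sum_sub_distrib, sum_weights,
    Finset.sum_ite_eq' _ (∅ : Finset ι)]
  simp

lemma probEvent_union {ι : Type*} [DecidableEq ι] (V₁ V₂ : Finset ι) (hd : Disjoint V₁ V₂)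
    (p : ℝ) (E : Finset ι → Prop) :
    probEvent (V₁ ∪ V₂) p E
      = ∑ A₁ ∈ V₁.powerset, ∑ A₂ ∈ V₂.powerset,
          (if E (A₁ ∪ A₂) then (p ^ A₁.card * (1 - p) ^ (V₁.card - A₁.card)) *
            (p ^ A₂.card * (1 - p) ^ (V₂.card - A₂.card)) else 0) := by
  rw [probEvent, ← Finset.sum_product']
  refine Finset.sum_nbij' (fun A => (A ∩ V₁, A ∩ V₂)) (fun q => q.1 ∪ q.2) ?_ ?_ ?_ ?_ ?_
  · intro A hA
    simp only [mem_product, mem_powerset]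
    exact ⟨inter_subset_right, inter_subset_right⟩
  · intro q hq
    simp only [mem_product, mem_powerset] at hq
    rw [mem_powerset]
    exact union_subset_union hq.1 hq.2
  · intro A hA
    rw [mem_powerset] at hA
    simp only
    rw [← Finset.inter_union_distrib_left, Finset.inter_eq_left.2 hA]
  · intro q hq
    simp only [mem_product, mem_powerset] at hq
    have h1 : Disjoint q.1 V₂ := Disjoint.mono_left hq.1 hd
    have h2 : Disjoint q.2 V₁ := Disjoint.mono_left hq.2 hd.symm
    rw [Finset.union_inter_distrib_right, Finset.union_inter_distrib_right,
      Finset.inter_eq_left.2 hq.1, Finset.inter_eq_left.2 hq.2,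
      Finset.disjoint_iff_inter_eq_empty.1 h1, Finset.disjoint_iff_inter_eq_empty.1 h2]
    simp
  · intro A hA
    rw [mem_powerset] at hA
    have hA12 : A ∩ V₁ ∪ A ∩ V₂ = A := by
      rw [← Finset.inter_union_distrib_left, Finset.inter_eq_left.2 hA]
    have hdisj : Disjoint (A ∩ V₁) (A ∩ V₂) :=
      Disjoint.mono inter_subset_right inter_subset_right hd
    have hcard : A.card = (A ∩ V₁).card + (A ∩ V₂).card := by
      rw [← card_union_of_disjoint hdisj, hA12]
    have hVcard : (V₁ ∪ V₂).card = V₁.card + V₂.card := card_union_of_disjoint hd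
    have hle1 : (A ∩ V₁).card ≤ V₁.card := card_le_card inter_subset_right
    have hle2 : (A ∩ V₂).card ≤ V₂.card := card_le_card inter_subset_right
    simp only [hA12]
    congr 1
    rw [hcard, hVcard, pow_add]
    have : V₁.card + V₂.card - ((A ∩ V₁).card + (A ∩ V₂).card)
        = (V₁.card - (A ∩ V₁).card) + (V₂.card - (A ∩ V₂).card) := by omega
    rw [this, pow_add]
    ring

/-! ### Geometric lemmas -/

lemma mem_rect {k n : ℕ} {A : Finset (ℤ × ℤ)} (hA : A ⊆ rectFin k n) {v : ℤ × ℤ}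
    (hv : v ∈ A) : 1 ≤ v.1 ∧ v.1 ≤ (k : ℤ) ∧ 1 ≤ v.2 ∧ v.2 ≤ (n : ℤ) := by
  have := hA hv
  simp only [rectFin, mem_product, mem_Icc] at this
  tauto

lemma mem_col {c : ℤ} {n : ℕ} {B : Finset (ℤ × ℤ)} (hB : B ⊆ {c} ×ˢ Finset.Icc 1 (n : ℤ))
    {v : ℤ × ℤ} (hv : v ∈ B) : v.1 = c ∧ 1 ≤ v.2 ∧ v.2 ≤ (n : ℤ) := by
  have := hB hv
  simp only [mem_product, mem_singleton, mem_Icc] at this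
  tauto

lemma rect_succ (k n : ℕ) :
    rectFin (k + 1) n = rectFin k n ∪ ({((k + 1 : ℕ) : ℤ)} ×ˢ Finset.Icc 1 (n : ℤ)) := by
  ext ⟨a, b⟩
  simp only [rectFin, mem_union, mem_product, mem_Icc, mem_singleton]
  push_cast
  omega

lemma rect_col_disjoint (k n : ℕ) :
    Disjoint (rectFin k n) ({((k + 1 : ℕ) : ℤ)} ×ˢ Finset.Icc 1 (n : ℤ)) := by
  rw [Finset.disjoint_left]
  rintro ⟨a, b⟩ h1 h2
  simp only [rectFin, mem_product, mem_Icc, mem_singleton] at h1 h2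
  push_cast at h1 h2
  omega

lemma col_card (c : ℤ) (n : ℕ) : ({c} ×ˢ Finset.Icc 1 (n : ℤ)).card = n := by
  rw [Finset.card_product, Finset.card_singleton, Int.card_Icc]
  simp

/-! ### Event decompositions -/

lemma cross_iff (k n : ℕ) (A₁ A₂ : Finset (ℤ × ℤ)) (h₁ : A₁ ⊆ rectFin k n)
    (h₂ : A₂ ⊆ {((k + 1 : ℕ) : ℤ)} ×ˢ Finset.Icc 1 (n : ℤ)) :
    CrossedLeftRight (k + 1) n (A₁ ∪ A₂) ↔ (NoVerticalDoubleGap k n A₁ ∧ A₂.Nonempty) := by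
  constructor
  · rintro ⟨hnv, v, hv, hv1, hv2⟩
    rcases Finset.mem_union.1 hv with h | h
    · have := mem_rect h₁ h
      push_cast at hv1
      omega
    · refine ⟨?_, ⟨v, h⟩⟩
      intro j hj1 hj2
      obtain ⟨w, hw, hwc, hwy⟩ := hnv j hj1 (by push_cast; omega)
      rcases Finset.mem_union.1 hw with h' | h'
      · exact ⟨w, h', hwc, hwy⟩
      · have := mem_col h₂ h'
        push_cast at this
        omega
  · rintro ⟨hnv, b, hb⟩
    have hbc := mem_col h₂ hb
    refine ⟨?_, b, Finset.mem_union_right _ hb, hbc.1, hbc.2⟩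
    intro j hj1 hj2
    push_cast at hj2
    by_cases hjk : j ≤ (k : ℤ) - 1
    · obtain ⟨w, hw, hwc, hwy⟩ := hnv j hj1 hjk
      exact ⟨w, Finset.mem_union_left _ hw, hwc, hwy⟩
    · refine ⟨b, Finset.mem_union_right _ hb, Or.inr ?_, hbc.2⟩
      push_cast [hbc.1]
      omega

lemma nvdg_iff (k n : ℕ) (A₁ A₂ : Finset (ℤ × ℤ)) (h₁ : A₁ ⊆ rectFin (k + 1) n)
    (h₂ : A₂ ⊆ {((k + 1 + 1 : ℕ) : ℤ)} ×ˢ Finset.Icc 1 (n : ℤ)) :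
    NoVerticalDoubleGap (k + 2) n (A₁ ∪ A₂) ↔
      (NoVerticalDoubleGap (k + 1) n A₁ ∧
        (A₂.Nonempty ∨ ∃ v ∈ A₁, v.1 = ((k + 1 : ℕ) : ℤ) ∧ 1 ≤ v.2 ∧ v.2 ≤ (n : ℤ))) := by
  constructor
  · intro hnv
    constructor
    · intro j hj1 hj2
      push_cast at hj2
      obtain ⟨w, hw, hwc, hwy⟩ := hnv j hj1 (by push_cast; omega)
      rcases Finset.mem_union.1 hw with h' | h'
      · exact ⟨w, h', hwc, hwy⟩
      · have := mem_col h₂ h'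
        push_cast at this
        omega
    · obtain ⟨w, hw, hwc, hwy⟩ := hnv ((k : ℤ) + 1) (by omega) (by push_cast; omega)
      rcases Finset.mem_union.1 hw with h' | h'
      · refine Or.inr ⟨w, h', ?_, hwy⟩
        have := mem_rect h₁ h'
        push_cast
        push_cast at this
        omega
      · exact Or.inl ⟨w, h'⟩
  · rintro ⟨hnv, hor⟩
    intro j hj1 hj2
    push_cast at hj2
    by_cases hjk : j ≤ (k : ℤ)
    · obtain ⟨w, hw, hwc, hwy⟩ := hnv j hj1 (by push_cast; omega)
      exact ⟨w, Finset.mem_union_left _ hw, hwc, hwy⟩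
    · have hj : j = (k : ℤ) + 1 := by omega
      rcases hor with ⟨b, hb⟩ | ⟨v, hv, hvc, hvy⟩
      · have hbc := mem_col h₂ hb
        refine ⟨b, Finset.mem_union_right _ hb, Or.inr ?_, hbc.2⟩
        push_cast [hbc.1]
        omega
      · refine ⟨v, Finset.mem_union_left _ hv, Or.inl ?_, hvy⟩
        push_cast at hvc
        omega

/-! ### Recursions -/

lemma H_zero (n : ℕ) (p : ℝ) :
    probEvent (rectFin 0 n) p (NoVerticalDoubleGap 0 n) = 1 := by
  have h0 : rectFin 0 n = ∅ := by
    rw [rectFin, show Finset.Icc (1 : ℤ) ((0 : ℕ) : ℤ) = ∅ by simp, Finset.empty_product]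
  rw [probEvent, h0]
  have hh : NoVerticalDoubleGap 0 n ∅ := by
    intro j hj1 hj2
    push_cast at hj2
    omega
  simp [hh]

lemma H_one (n : ℕ) (p : ℝ) :
    probEvent (rectFin 1 n) p (NoVerticalDoubleGap 1 n) = 1 := by
  rw [probEvent]
  have key : ∀ A ∈ (rectFin 1 n).powerset,
      (if NoVerticalDoubleGap 1 n A then
          p ^ A.card * (1 - p) ^ ((rectFin 1 n).card - A.card) else 0)
        = p ^ A.card * (1 - p) ^ ((rectFin 1 n).card - A.card) := by
    intro A _
    rw [if_pos]
    intro j hj1 hj2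
    exfalso
    push_cast at hj2
    omega
  rw [Finset.sum_congr rfl key, sum_weights]

lemma F_succ (k n : ℕ) (p : ℝ) :
    probEvent (rectFin (k + 1) n) p (CrossedLeftRight (k + 1) n)
      = (1 - (1 - p) ^ n) * probEvent (rectFin k n) p (NoVerticalDoubleGap k n) := by
  rw [rect_succ, probEvent_union _ _ (rect_col_disjoint k n), probEvent, Finset.mul_sum]
  apply Finset.sum_congr rfl
  intro A₁ hA₁
  rw [Finset.mem_powerset] at hA₁
  have key : ∀ A₂ ∈ ({((k + 1 : ℕ) : ℤ)} ×ˢ Finset.Icc 1 (n : ℤ)).powerset,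
      (if CrossedLeftRight (k + 1) n (A₁ ∪ A₂) then
          (p ^ A₁.card * (1 - p) ^ ((rectFin k n).card - A₁.card)) *
          (p ^ A₂.card * (1 - p) ^
            (({((k + 1 : ℕ) : ℤ)} ×ˢ Finset.Icc 1 (n : ℤ)).card - A₂.card)) else 0)
        = (if NoVerticalDoubleGap k n A₁ then
            p ^ A₁.card * (1 - p) ^ ((rectFin k n).card - A₁.card) else 0)
          * (if A₂.Nonempty then p ^ A₂.card * (1 - p) ^
              (({((k + 1 : ℕ) : ℤ)} ×ˢ Finset.Icc 1 (n : ℤ)).card - A₂.card) else 0) := by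
    intro A₂ hA₂
    rw [Finset.mem_powerset] at hA₂
    have hiff := cross_iff k n A₁ A₂ hA₁ hA₂
    by_cases hQ : NoVerticalDoubleGap k n A₁ <;> by_cases hR : A₂.Nonempty <;>
      simp [hiff, hQ, hR]
  rw [Finset.sum_congr rfl key, ← Finset.mul_sum, sum_weights_nonempty, col_card]
  ring

lemma H_succ (k n : ℕ) (p : ℝ) :
    probEvent (rectFin (k + 2) n) p (NoVerticalDoubleGap (k + 2) n)
      = (1 - (1 - p) ^ n) * probEvent (rectFin (k + 1) n) p (NoVerticalDoubleGap (k + 1) n)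
        + (1 - p) ^ n * probEvent (rectFin (k + 1) n) p (CrossedLeftRight (k + 1) n) := by
  have hr : rectFin (k + 2) n
      = rectFin (k + 1) n ∪ ({((k + 1 + 1 : ℕ) : ℤ)} ×ˢ Finset.Icc 1 (n : ℤ)) :=
    rect_succ (k + 1) n
  rw [hr, probEvent_union _ _ (rect_col_disjoint (k + 1) n), probEvent, probEvent,
    Finset.mul_sum, Finset.mul_sum, ← Finset.sum_add_distrib]
  apply Finset.sum_congr rfl
  intro A₁ hA₁
  rw [Finset.mem_powerset] at hA₁
  set col := ({((k + 1 + 1 : ℕ) : ℤ)} ×ˢ Finset.Icc 1 (n : ℤ)) with hcol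
  set w₁ := p ^ A₁.card * (1 - p) ^ ((rectFin (k + 1) n).card - A₁.card) with hw₁
  by_cases hN : NoVerticalDoubleGap (k + 1) n A₁
  · by_cases hC : ∃ v ∈ A₁, v.1 = ((k + 1 : ℕ) : ℤ) ∧ 1 ≤ v.2 ∧ v.2 ≤ (n : ℤ)
    · have hcross : CrossedLeftRight (k + 1) n A₁ := ⟨hN, hC⟩
      have key : ∀ A₂ ∈ col.powerset,
          (if NoVerticalDoubleGap (k + 2) n (A₁ ∪ A₂) then
              w₁ * (p ^ A₂.card * (1 - p) ^ (col.card - A₂.card)) else 0)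
            = w₁ * (p ^ A₂.card * (1 - p) ^ (col.card - A₂.card)) := by
        intro A₂ hA₂
        rw [Finset.mem_powerset] at hA₂
        exact if_pos ((nvdg_iff k n A₁ A₂ hA₁ hA₂).2 ⟨hN, Or.inr hC⟩)
      rw [Finset.sum_congr rfl key, ← Finset.mul_sum, sum_weights, if_pos hN, if_pos hcross]
      ring
    · have hcross : ¬ CrossedLeftRight (k + 1) n A₁ := fun h => hC h.2
      have key : ∀ A₂ ∈ col.powerset,
          (if NoVerticalDoubleGap (k + 2) n (A₁ ∪ A₂) then
              w₁ * (p ^ A₂.card * (1 - p) ^ (col.card - A₂.card)) else 0)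
            = w₁ * (if A₂.Nonempty then
                p ^ A₂.card * (1 - p) ^ (col.card - A₂.card) else 0) := by
        intro A₂ hA₂
        rw [Finset.mem_powerset] at hA₂
        by_cases hR : A₂.Nonempty
        · rw [if_pos ((nvdg_iff k n A₁ A₂ hA₁ hA₂).2 ⟨hN, Or.inl hR⟩), if_pos hR]
        · rw [if_neg, if_neg hR, mul_zero]
          intro hcon
          rcases (nvdg_iff k n A₁ A₂ hA₁ hA₂).1 hcon with ⟨_, h | h⟩
          · exact hR h
          · exact hC h
      rw [Finset.sum_congr rfl key, ← Finset.mul_sum, sum_weights_nonempty, col_card,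
        if_pos hN, if_neg hcross]
      ring
  · have hcross : ¬ CrossedLeftRight (k + 1) n A₁ := fun h => hN h.1
    have key : ∀ A₂ ∈ col.powerset,
        (if NoVerticalDoubleGap (k + 2) n (A₁ ∪ A₂) then
            w₁ * (p ^ A₂.card * (1 - p) ^ (col.card - A₂.card)) else 0) = 0 := by
      intro A₂ hA₂
      rw [Finset.mem_powerset] at hA₂
      exact if_neg (fun hcon => hN ((nvdg_iff k n A₁ A₂ hA₁ hA₂).1 hcon).1)
    rw [Finset.sum_congr rfl key, Finset.sum_const_zero, if_neg hN, if_neg hcross]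
    ring

/-! ### Analytic facts about betaFn -/

lemma betaFn_pos {u : ℝ} (hu0 : 0 < u) (hu1 : u ≤ 1) : 0 < betaFn u := by
  have hs0 : 0 ≤ Real.sqrt (u * (4 - 3 * u)) := Real.sqrt_nonneg _
  rw [betaFn]
  linarith

lemma le_betaFn {u : ℝ} (hu0 : 0 < u) (hu1 : u ≤ 1) : u ≤ betaFn u := by
  have hnn : 0 ≤ u * (4 - 3 * u) := by nlinarith
  have hs : Real.sqrt (u * (4 - 3 * u)) ^ 2 = u * (4 - 3 * u) := Real.sq_sqrt hnn
  have hs0 : 0 ≤ Real.sqrt (u * (4 - 3 * u)) := Real.sqrt_nonneg _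
  rw [betaFn]
  nlinarith [hs, hs0]

lemma betaFn_sq {u : ℝ} (hu0 : 0 < u) (hu1 : u ≤ 1) :
    betaFn u ^ 2 = u * betaFn u + u * (1 - u) := by
  have hnn : 0 ≤ u * (4 - 3 * u) := by nlinarith
  have hs : Real.sqrt (u * (4 - 3 * u)) ^ 2 = u * (4 - 3 * u) := Real.sq_sqrt hnn
  rw [betaFn]
  linear_combination hs / 4

/-! ### Main theorem -/

/-- Lemma 8 of Holroyd: the probability of being crossed from left to right is
at most `exp(−m·g(nq))`. -/
theorem prob_crossed_le (m n : ℕ) (hm : 1 ≤ m) (hn : 1 ≤ n)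
    (p : ℝ) (hp0 : 0 < p) (hp1 : p < 1) :
    probEvent (rectFin m n) p (CrossedLeftRight m n) ≤
      Real.exp (-(m : ℝ) * gFn ((n : ℝ) * (-Real.log (1 - p)))) := by
  have h1p : 0 < 1 - p := by linarith
  set e : ℝ := (1 - p) ^ n with he
  have he0 : 0 ≤ e := pow_nonneg h1p.le n
  have he1 : e < 1 := pow_lt_one₀ (by linarith) (by linarith) (by omega)
  set u : ℝ := 1 - e with hu
  have hu0 : 0 < u := by simp [hu]; linarith
  have hu1 : u ≤ 1 := by simp [hu]; linarith
  set b : ℝ := betaFn u with hb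
  have hb0 : 0 < b := betaFn_pos hu0 hu1
  have hub : u ≤ b := le_betaFn hu0 hu1
  have hb2 : b ^ 2 = u * b + u * (1 - u) := betaFn_sq hu0 hu1
  -- the RHS equals b ^ m
  have hrhs : Real.exp (-(m : ℝ) * gFn ((n : ℝ) * (-Real.log (1 - p)))) = b ^ m := by
    have hexp : Real.exp (-((n : ℝ) * (-Real.log (1 - p)))) = e := by
      rw [show -((n : ℝ) * (-Real.log (1 - p))) = (n : ℝ) * Real.log (1 - p) by ring,
        Real.exp_nat_mul, Real.exp_log h1p]
    rw [gFn, hexp]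
    rw [show -(m : ℝ) * -Real.log (betaFn (1 - e)) = (m : ℝ) * Real.log (betaFn (1 - e)) by ring]
    rw [← hu, ← hb, Real.exp_nat_mul, Real.exp_log hb0]
  rw [hrhs]
  -- recursion bound
  have claim : ∀ k : ℕ,
      u * probEvent (rectFin k n) p (NoVerticalDoubleGap k n) ≤ b ^ (k + 1) ∧
      u * probEvent (rectFin (k + 1) n) p (NoVerticalDoubleGap (k + 1) n) ≤ b ^ (k + 2) := by
    intro k
    induction k with
    | zero =>
      constructor
      · rw [H_zero, mul_one]
        simpa using hub
      · rw [H_one, mul_one]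
        have h2 : u * u ≤ u * b := mul_le_mul_of_nonneg_left hub hu0.le
        calc u = u * u + u * (1 - u) := by ring
          _ ≤ u * b + u * (1 - u) := by linarith
          _ = b ^ 2 := hb2.symm
          _ = b ^ (0 + 2) := by norm_num
    | succ k ih =>
      refine ⟨ih.2, ?_⟩
      have h1 := ih.1
      have h2 := ih.2
      rw [show k + 1 + 1 = k + 2 from rfl, H_succ k n p, F_succ k n p]
      have hcalc : u * ((1 - e) * probEvent (rectFin (k + 1) n) p (NoVerticalDoubleGap (k + 1) n)
            + e * ((1 - e) * probEvent (rectFin k n) p (NoVerticalDoubleGap k n)))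
          = u * (u * probEvent (rectFin (k + 1) n) p (NoVerticalDoubleGap (k + 1) n))
            + (u * e) * (u * probEvent (rectFin k n) p (NoVerticalDoubleGap k n)) := by
        rw [hu]; ring
      calc u * ((1 - (1 - p) ^ n) * probEvent (rectFin (k + 1) n) p (NoVerticalDoubleGap (k + 1) n)
            + (1 - p) ^ n * ((1 - (1 - p) ^ n) * probEvent (rectFin k n) p (NoVerticalDoubleGap k n)))
          = u * (u * probEvent (rectFin (k + 1) n) p (NoVerticalDoubleGap (k + 1) n))
            + (u * e) * (u * probEvent (rectFin k n) p (NoVerticalDoubleGap k n)) := by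
            rw [hu, he]; ring
        _ ≤ u * b ^ (k + 2) + (u * e) * b ^ (k + 1) := by
            exact add_le_add (mul_le_mul_of_nonneg_left h2 hu0.le)
              (mul_le_mul_of_nonneg_left h1 (mul_nonneg hu0.le he0))
        _ = b ^ (k + 1) * (u * b + u * (1 - u)) := by
            rw [hu]; ring
        _ = b ^ (k + 1) * b ^ 2 := by rw [hb2]
        _ = b ^ (k + 2 + 1) := by ring
  obtain ⟨m', rfl⟩ : ∃ m', m = m' + 1 := ⟨m - 1, by omega⟩
  rw [F_succ m' n p]
  exact (claim m').1

-- #print axioms prob_crossed_le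
end
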